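/- Postprocessing corollary: assume D satisfies RIP((A+1)n) with constant δ := δ_{(A+1)n} < 1, and suppose f_{An} = Φc^{An} with #supp(c^{An}) ≤ An satisfies ‖f − f_{An}‖ ≤ C σ_n(f). Let T be a set of indices of n largest (in absolute value) entries of c^{An}, and f_n* := Φ(c^{An}_T). Then ‖f − f_n*‖ ≤ C* σ_n(f), where C* = 2 + 3(C+2)√((1+δ)/(1−δ)). -/

import Mathlib

open scoped RealInnerProductSpace BigOperators

/-- The synthesis operator of a dictionary: `Φ c = ∑ γ c_γ φ_γ`. -/
noncomputable def dictSum {Γ H : Type*} [NormedAddCommGroup H] [InnerProductSpace ℝ H]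
    (φ : Γ → H) (c : Γ →₀ ℝ) : H :=
  c.sum fun γ a => a • φ γ

/-- The squared ℓ² norm of a finitely supported sequence. -/
noncomputable def l2normSq {Γ : Type*} (c : Γ →₀ ℝ) : ℝ :=
  ∑ γ ∈ c.support, (c γ) ^ 2

/-- The restricted isometry property of order `m` with constant `δ`. -/
def RIP {Γ H : Type*} [NormedAddCommGroup H] [InnerProductSpace ℝ H]
    (φ : Γ → H) (m : ℕ) (δ : ℝ) : Prop :=
  ∀ c : Γ →₀ ℝ, c.support.card ≤ m →
    (1 - δ) * l2normSq c ≤ ‖dictSum φ c‖ ^ 2 ∧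
    ‖dictSum φ c‖ ^ 2 ≤ (1 + δ) * l2normSq c

/-- The set `Σ_n` of `n`-term linear combinations from the dictionary. -/
def SigmaN {Γ H : Type*} [NormedAddCommGroup H] [InnerProductSpace ℝ H]
    (φ : Γ → H) (n : ℕ) : Set H :=
  {g | ∃ c : Γ →₀ ℝ, c.support.card ≤ n ∧ dictSum φ c = g}

/-- The error of best `n`-term approximation. -/
noncomputable def bestErr {Γ H : Type*} [NormedAddCommGroup H] [InnerProductSpace ℝ H]
    (φ : Γ → H) (n : ℕ) (f : H) : ℝ :=
  sInf ((fun g => ‖f - g‖) '' SigmaN φ n)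

private lemma dictSum_sub' {Γ H : Type*} [NormedAddCommGroup H] [InnerProductSpace ℝ H]
    (φ : Γ → H) (a b : Γ →₀ ℝ) : dictSum φ (a - b) = dictSum φ a - dictSum φ b := by
  unfold dictSum
  exact Finsupp.sum_sub_index (fun γ b₁ b₂ => sub_smul b₁ b₂ (φ γ))

private lemma l2normSq_eq_sum' {Γ : Type*} (c : Γ →₀ ℝ) (U : Finset Γ)
    (h : c.support ⊆ U) : l2normSq c = ∑ γ ∈ U, (c γ) ^ 2 := by
  unfold l2normSq
  refine Finset.sum_subset h fun γ _ hγ => ?_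
  rw [Finsupp.notMem_support_iff.mp hγ]; ring

private lemma l2normSq_nonneg' {Γ : Type*} (c : Γ →₀ ℝ) : 0 ≤ l2normSq c :=
  Finset.sum_nonneg fun _ _ => sq_nonneg _

private lemma thresh_sum_le' {Γ : Type*} [DecidableEq Γ] (d : Γ →₀ ℝ) (S T : Finset Γ)
    (hcard : S.card ≤ T.card)
    (hT : ∀ γ ∈ T, ∀ γ' ∉ T, |d γ'| ≤ |d γ|) :
    ∑ γ ∈ S \ T, (d γ) ^ 2 ≤ ∑ γ ∈ T \ S, (d γ) ^ 2 := by
  have hc : (S \ T).card ≤ (T \ S).card := by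
    have h1 := Finset.card_sdiff_add_card_inter S T
    have h2 := Finset.card_sdiff_add_card_inter T S
    rw [Finset.inter_comm T S] at h2
    omega
  rcases Finset.eq_empty_or_nonempty (T \ S) with h | h
  · have h0 : (T \ S).card = 0 := by rw [h]; exact Finset.card_empty
    have hS : S \ T = ∅ := Finset.card_eq_zero.mp (by omega)
    simp [hS, h]
  · obtain ⟨γ₀, hγ₀, hmeq⟩ := Finset.exists_mem_eq_inf' h (fun γ => (d γ) ^ 2)
    set m := (T \ S).inf' h (fun γ => (d γ) ^ 2) with hm
    have hγ₀T : γ₀ ∈ T := (Finset.mem_sdiff.mp hγ₀).1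
    have hm0 : 0 ≤ m := hmeq ▸ sq_nonneg _
    have hbound : ∀ γ ∈ S \ T, (d γ) ^ 2 ≤ m := by
      intro γ hγ
      have hγT : γ ∉ T := (Finset.mem_sdiff.mp hγ).2
      have habs := hT γ₀ hγ₀T γ hγT
      rw [hmeq]
      calc (d γ) ^ 2 = |d γ| ^ 2 := (sq_abs _).symm
        _ ≤ |d γ₀| ^ 2 := by gcongr
        _ = (d γ₀) ^ 2 := sq_abs _
    calc ∑ γ ∈ S \ T, (d γ) ^ 2 ≤ (S \ T).card • m :=
          Finset.sum_le_card_nsmul _ _ m hbound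
      _ ≤ (T \ S).card • m := by
          rw [nsmul_eq_mul, nsmul_eq_mul]
          exact mul_le_mul_of_nonneg_right (Nat.cast_le.mpr hc) hm0
      _ ≤ ∑ γ ∈ T \ S, (d γ) ^ 2 :=
          Finset.card_nsmul_le_sum _ _ m (fun γ hγ => Finset.inf'_le _ hγ)

private lemma l2_triangle' {Γ : Type*} [DecidableEq Γ] (a b : Γ →₀ ℝ) (U : Finset Γ)
    (ha : a.support ⊆ U) (hb : b.support ⊆ U) :
    l2normSq (a + b) ≤ (Real.sqrt (l2normSq a) + Real.sqrt (l2normSq b)) ^ 2 := by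
  have hab : (a + b).support ⊆ U :=
    (Finsupp.support_add).trans (Finset.union_subset ha hb)
  rw [l2normSq_eq_sum' (a + b) U hab, l2normSq_eq_sum' a U ha, l2normSq_eq_sum' b U hb]
  have hcs := Real.sum_mul_le_sqrt_mul_sqrt U (fun γ => a γ) (fun γ => b γ)
  have hA : Real.sqrt (∑ γ ∈ U, (a γ) ^ 2) ^ 2 = ∑ γ ∈ U, (a γ) ^ 2 :=
    Real.sq_sqrt (Finset.sum_nonneg fun _ _ => sq_nonneg _)
  have hB : Real.sqrt (∑ γ ∈ U, (b γ) ^ 2) ^ 2 = ∑ γ ∈ U, (b γ) ^ 2 :=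
    Real.sq_sqrt (Finset.sum_nonneg fun _ _ => sq_nonneg _)
  have hexp : ∑ γ ∈ U, ((a + b) γ) ^ 2
      = (∑ γ ∈ U, (a γ) ^ 2) + 2 * (∑ γ ∈ U, a γ * b γ) + ∑ γ ∈ U, (b γ) ^ 2 := by
    rw [Finset.mul_sum, ← Finset.sum_add_distrib, ← Finset.sum_add_distrib]
    refine Finset.sum_congr rfl fun γ _ => ?_
    rw [Finsupp.add_apply]; ring
  nlinarith [hcs, Real.sqrt_nonneg (∑ γ ∈ U, (a γ) ^ 2),
    Real.sqrt_nonneg (∑ γ ∈ U, (b γ) ^ 2)]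

set_option maxHeartbeats 2000000 in
/-- Postprocessing corollary: if `f_{An} = Φc^{An}` is an `An`-term approximation with
`‖f − f_{An}‖ ≤ C σ_n(f)` and `T` is a set of `n` largest entries of `c^{An}`, then the
`n`-term approximation `f_n* = Φ(c^{An}_T)` satisfies
`‖f − f_n*‖ ≤ (2 + 3(C+2)√((1+δ)/(1−δ))) σ_n(f)`. -/
theorem stmt13_postprocessing
    {Γ H : Type*} [Countable Γ] [DecidableEq Γ]
    [NormedAddCommGroup H] [InnerProductSpace ℝ H] [CompleteSpace H]
    (φ : Γ → H) (hnorm : ∀ γ, ‖φ γ‖ = 1)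
    (A n : ℕ) (hn : 1 ≤ n)
    (δ : ℝ) (hδ0 : 0 ≤ δ) (hδ : δ < 1) (hRIP : RIP φ ((A + 1) * n) δ)
    (f : H) (cAn : Γ →₀ ℝ) (hsupp : cAn.support.card ≤ A * n)
    (C : ℝ) (hC : 0 < C)
    (happrox : ‖f - dictSum φ cAn‖ ≤ C * bestErr φ n f)
    (T : Finset Γ) (hTcard : T.card = n)
    (hTlargest : ∀ γ ∈ T, ∀ γ' ∉ T, |cAn γ'| ≤ |cAn γ|) :
    ‖f - dictSum φ (cAn.filter (· ∈ T))‖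
      ≤ (2 + 3 * (C + 2) * Real.sqrt ((1 + δ) / (1 - δ))) * bestErr φ n f := by
  classical
  set σ := bestErr φ n f with hσdef
  have hne : ((fun g => ‖f - g‖) '' SigmaN φ n).Nonempty :=
    ⟨‖f - 0‖, ⟨0, ⟨0, by simp, by simp [dictSum]⟩, rfl⟩⟩
  have hσ0 : 0 ≤ σ := Real.sInf_nonneg (by rintro x ⟨g, _, rfl⟩; positivity)
  set K := Real.sqrt ((1 + δ) / (1 - δ)) with hKdef
  have hK0 : 0 ≤ K := Real.sqrt_nonneg _
  have h1δ : (0:ℝ) < 1 - δ := by linarith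
  have hK2 : K ^ 2 = (1 + δ) / (1 - δ) := Real.sq_sqrt (by positivity)
  refine le_of_forall_pos_le_add fun ε' hε' => ?_
  set ε := ε' / (1 + 3 * K) with hεdef
  have hεpos : 0 < ε := div_pos hε' (by linarith)
  have hεval : (1 + 3 * K) * ε = ε' := by
    rw [hεdef]; field_simp
  obtain ⟨x, ⟨g, ⟨c, hcard, rfl⟩, rfl⟩, hx⟩ := Real.lt_sInf_add_pos hne hεpos
  have hfc : ‖f - dictSum φ c‖ < σ + ε := hx
  set d := cAn with hd
  set dT := cAn.filter (· ∈ T) with hdT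
  have hdTsupp : dT.support ⊆ d.support := by
    rw [hdT, Finsupp.support_filter]; exact Finset.filter_subset _ _
  -- support cardinality bounds
  have hsub1 : (c - dT).support.card ≤ (A + 1) * n := by
    calc (c - dT).support.card ≤ (c.support ∪ dT.support).card :=
          Finset.card_le_card Finsupp.support_sub
      _ ≤ c.support.card + dT.support.card := Finset.card_union_le _ _
      _ ≤ n + A * n := add_le_add hcard ((Finset.card_le_card hdTsupp).trans hsupp)
      _ = (A + 1) * n := by ring
  have hsub2 : (c - d).support.card ≤ (A + 1) * n := by
    calc (c - d).support.card ≤ (c.support ∪ d.support).card :=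
          Finset.card_le_card Finsupp.support_sub
      _ ≤ c.support.card + d.support.card := Finset.card_union_le _ _
      _ ≤ n + A * n := add_le_add hcard hsupp
      _ = (A + 1) * n := by ring
  have hlow := (hRIP (c - d) hsub2).1
  have hup := (hRIP (c - dT) hsub1).2
  -- pointwise formula for d - dT
  have happ : ∀ γ, (d - dT) γ = if γ ∈ T then 0 else d γ := by
    intro γ
    rw [Finsupp.sub_apply]
    by_cases hγ : γ ∈ T
    · simp [hd, hdT, Finsupp.filter_apply_pos _ _ hγ, hγ]
    · simp [hdT, Finsupp.filter_apply_neg _ _ hγ, hγ]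
  have hsuppddT : (d - dT).support ⊆ d.support \ T := by
    intro γ hγ
    rw [Finsupp.mem_support_iff, happ γ] at hγ
    by_cases hγT : γ ∈ T
    · simp [hγT] at hγ
    · simp only [hγT, if_false] at hγ
      exact Finset.mem_sdiff.mpr ⟨Finsupp.mem_support_iff.mpr hγ, hγT⟩
  -- ℓ² thresholding: ‖d - dT‖² ≤ ‖c - d‖²
  have hthresh : l2normSq (d - dT) ≤ l2normSq (c - d) := by
    have h1 : l2normSq (d - dT) = ∑ γ ∈ d.support \ T, (d γ) ^ 2 := by
      rw [l2normSq_eq_sum' _ _ hsuppddT]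
      refine Finset.sum_congr rfl fun γ hγ => ?_
      rw [happ γ, if_neg (Finset.mem_sdiff.mp hγ).2]
    have hS : c.support.card ≤ T.card := by rw [hTcard]; exact hcard
    have hkey : ∑ γ ∈ c.support \ T, (d γ) ^ 2 ≤ ∑ γ ∈ T \ c.support, (d γ) ^ 2 :=
      thresh_sum_le' d c.support T hS hTlargest
    -- split D \ T and D \ S over the common part W
    have hsplit1 : d.support \ T
        = (d.support \ (T ∪ c.support)) ∪ ((d.support ∩ c.support) \ T) := by
      ext γ
      simp only [Finset.mem_sdiff, Finset.mem_union, Finset.mem_inter]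
      tauto
    have hsplit2 : d.support \ c.support
        = (d.support \ (T ∪ c.support)) ∪ ((d.support ∩ T) \ c.support) := by
      ext γ
      simp only [Finset.mem_sdiff, Finset.mem_union, Finset.mem_inter]
      tauto
    have hdisj1 : Disjoint (d.support \ (T ∪ c.support)) ((d.support ∩ c.support) \ T) := by
      rw [Finset.disjoint_left]
      intro γ h1 h2
      simp only [Finset.mem_sdiff, Finset.mem_union, Finset.mem_inter] at h1 h2
      tauto
    have hdisj2 : Disjoint (d.support \ (T ∪ c.support)) ((d.support ∩ T) \ c.support) := by
      rw [Finset.disjoint_left]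
      intro γ h1 h2
      simp only [Finset.mem_sdiff, Finset.mem_union, Finset.mem_inter] at h1 h2
      tauto
    have hmid : ∑ γ ∈ (d.support ∩ c.support) \ T, (d γ) ^ 2
        ≤ ∑ γ ∈ (d.support ∩ T) \ c.support, (d γ) ^ 2 := by
      calc ∑ γ ∈ (d.support ∩ c.support) \ T, (d γ) ^ 2
          ≤ ∑ γ ∈ c.support \ T, (d γ) ^ 2 := by
            refine Finset.sum_le_sum_of_subset_of_nonneg ?_ fun _ _ _ => sq_nonneg _
            intro γ hγ
            simp only [Finset.mem_sdiff, Finset.mem_inter] at hγ ⊢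
            tauto
        _ ≤ ∑ γ ∈ T \ c.support, (d γ) ^ 2 := hkey
        _ = ∑ γ ∈ (d.support ∩ T) \ c.support, (d γ) ^ 2 := by
            refine (Finset.sum_subset ?_ ?_).symm
            · intro γ hγ
              simp only [Finset.mem_sdiff, Finset.mem_inter] at hγ ⊢
              tauto
            · intro γ hγ1 hγ2
              simp only [Finset.mem_sdiff, Finset.mem_inter] at hγ1 hγ2
              have : γ ∉ d.support := by tauto
              rw [Finsupp.notMem_support_iff.mp this]; ring
    have h2 : ∑ γ ∈ d.support \ T, (d γ) ^ 2 ≤ ∑ γ ∈ d.support \ c.support, (d γ) ^ 2 := by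
      rw [hsplit1, hsplit2, Finset.sum_union hdisj1, Finset.sum_union hdisj2]
      exact add_le_add_right hmid _
    have h3 : ∑ γ ∈ d.support \ c.support, (d γ) ^ 2 ≤ l2normSq (c - d) := by
      rw [l2normSq_eq_sum' (c - d) (c.support ∪ d.support) Finsupp.support_sub]
      have heq : ∑ γ ∈ d.support \ c.support, (d γ) ^ 2
          = ∑ γ ∈ d.support \ c.support, ((c - d) γ) ^ 2 := by
        refine Finset.sum_congr rfl fun γ hγ => ?_
        have hc0 : c γ = 0 := Finsupp.notMem_support_iff.mp (Finset.mem_sdiff.mp hγ).2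
        rw [Finsupp.sub_apply, hc0]; ring
      rw [heq]
      refine Finset.sum_le_sum_of_subset_of_nonneg ?_ fun _ _ _ => sq_nonneg _
      intro γ hγ
      exact Finset.mem_union_right _ (Finset.mem_sdiff.mp hγ).1
    linarith [h1 ▸ (h2.trans h3)]
  -- triangle in ℓ²: ‖c - dT‖² ≤ 4 ‖c - d‖²
  have hl2 : l2normSq (c - dT) ≤ 4 * l2normSq (c - d) := by
    have hdecomp : c - dT = (c - d) + (d - dT) := by
      rw [sub_add_sub_cancel]
    have hacd : (c - d).support ⊆ c.support ∪ d.support := Finsupp.support_sub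
    have hbdd : (d - dT).support ⊆ c.support ∪ d.support := by
      intro γ hγ
      exact Finset.mem_union_right _ (Finset.mem_sdiff.mp (hsuppddT hγ)).1
    have htri := l2_triangle' (c - d) (d - dT) (c.support ∪ d.support) hacd hbdd
    rw [← hdecomp] at htri
    have hsq : Real.sqrt (l2normSq (d - dT)) ≤ Real.sqrt (l2normSq (c - d)) :=
      Real.sqrt_le_sqrt hthresh
    have hcd0 : Real.sqrt (l2normSq (c - d)) ^ 2 = l2normSq (c - d) :=
      Real.sq_sqrt (l2normSq_nonneg' _)
    nlinarith [Real.sqrt_nonneg (l2normSq (c - d)), Real.sqrt_nonneg (l2normSq (d - dT))]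
  -- RIP combination
  have hΦ2 : ‖dictSum φ (c - dT)‖ ^ 2 ≤ (3 * K * ‖dictSum φ (c - d)‖) ^ 2 := by
    have e1 : (3 * K * ‖dictSum φ (c - d)‖) ^ 2 = 9 * K ^ 2 * ‖dictSum φ (c - d)‖ ^ 2 := by
      ring
    rw [e1, hK2]
    have h4 : ‖dictSum φ (c - dT)‖ ^ 2 ≤ (1 + δ) * (4 * l2normSq (c - d)) := by
      calc ‖dictSum φ (c - dT)‖ ^ 2 ≤ (1 + δ) * l2normSq (c - dT) := hup
        _ ≤ (1 + δ) * (4 * l2normSq (c - d)) := by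
            apply mul_le_mul_of_nonneg_left hl2 (by linarith)
    have h5 : (1 + δ) * (4 * l2normSq (c - d))
        ≤ 9 * ((1 + δ) / (1 - δ)) * ((1 - δ) * l2normSq (c - d)) := by
      have he : 9 * ((1 + δ) / (1 - δ)) * ((1 - δ) * l2normSq (c - d))
          = (1 + δ) * (9 * l2normSq (c - d)) := by
        field_simp
      rw [he]
      apply mul_le_mul_of_nonneg_left _ (by linarith : (0:ℝ) ≤ 1 + δ)
      nlinarith [l2normSq_nonneg' (c - d)]
    have h6 : 9 * ((1 + δ) / (1 - δ)) * ((1 - δ) * l2normSq (c - d))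
        ≤ 9 * ((1 + δ) / (1 - δ)) * ‖dictSum φ (c - d)‖ ^ 2 := by
      apply mul_le_mul_of_nonneg_left hlow (by positivity)
    linarith
  have hΦ : ‖dictSum φ (c - dT)‖ ≤ 3 * K * ‖dictSum φ (c - d)‖ := by
    have := Real.sqrt_le_sqrt hΦ2
    rwa [Real.sqrt_sq (norm_nonneg _), Real.sqrt_sq (by positivity)] at this
  -- bound on ‖Φc - Φd‖
  have hΦcd : ‖dictSum φ (c - d)‖ ≤ (σ + ε) + C * σ := by
    rw [dictSum_sub']
    calc ‖dictSum φ c - dictSum φ d‖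
        = ‖(dictSum φ c - f) + (f - dictSum φ d)‖ := by rw [sub_add_sub_cancel]
      _ ≤ ‖dictSum φ c - f‖ + ‖f - dictSum φ d‖ := norm_add_le _ _
      _ ≤ (σ + ε) + C * σ := by
          refine add_le_add ?_ happrox
          rw [norm_sub_rev]; exact le_of_lt hfc
  -- final chain
  calc ‖f - dictSum φ dT‖
      = ‖(f - dictSum φ c) + (dictSum φ c - dictSum φ dT)‖ := by rw [sub_add_sub_cancel]
    _ ≤ ‖f - dictSum φ c‖ + ‖dictSum φ c - dictSum φ dT‖ := norm_add_le _ _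
    _ = ‖f - dictSum φ c‖ + ‖dictSum φ (c - dT)‖ := by rw [dictSum_sub']
    _ ≤ (σ + ε) + 3 * K * ((σ + ε) + C * σ) := by
        refine add_le_add (le_of_lt hfc) (hΦ.trans ?_)
        exact mul_le_mul_of_nonneg_left hΦcd (by positivity)
    _ ≤ (2 + 3 * (C + 2) * K) * σ + ε' := by
        nlinarith [mul_nonneg hK0 hσ0, hεval]
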